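/- arXiv:1007.2055 — 6 statements merged into one kernel-verified Lean document; each statement's English description precedes it below -/
import Mathlib

section
/- For every α ∈ (0,2) and every x < 0, the function y ↦ u_α(x,y) is a probability density on ℝ, i.e. ∫₀^∞ (sin(απ/2)/π) · (y−x)⁻¹ · (−x/y)^{α/2} dy = 1. -/
open MeasureTheory Real Set

/-- The upwards-overshoot density
`u_α(x,y) = (sin(απ/2)/π) (y-x)⁻¹ (-x/y)^{α/2} 1_{[0,∞)}(y)` (for `x < 0`). -/
noncomputable def uDens (α x y : ℝ) : ℝ :=
  Set.indicator (Set.Ici (0 : ℝ))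
    (fun z => (Real.sin (α * π / 2) / π) * (z - x)⁻¹ * (-x / z) ^ (α / 2)) y

/-- Real Beta integral over `Ioo 0 1` equals `Γ a Γ b / Γ (a+b)`. -/
lemma real_beta_integral {a b : ℝ} (ha : 0 < a) (hb : 0 < b) :
    ∫ u in Set.Ioo (0 : ℝ) 1, u ^ (a - 1) * (1 - u) ^ (b - 1)
      = Real.Gamma a * Real.Gamma b / Real.Gamma (a + b) := by
  have hC : Complex.Gamma a * Complex.Gamma b
      = Complex.Gamma ((a : ℂ) + b) * Complex.betaIntegral a b := by
    have := Complex.Gamma_mul_Gamma_eq_betaIntegral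
      (s := (a : ℂ)) (t := (b : ℂ)) (by simpa using ha) (by simpa using hb)
    simpa using this
  have hbeta : Complex.betaIntegral a b
      = ((∫ u in Set.Ioo (0 : ℝ) 1, u ^ (a - 1) * (1 - u) ^ (b - 1) : ℝ) : ℂ) := by
    rw [Complex.betaIntegral, intervalIntegral.integral_of_le (by norm_num : (0:ℝ) ≤ 1),
      MeasureTheory.integral_Ioc_eq_integral_Ioo]
    rw [show ((∫ u in Set.Ioo (0 : ℝ) 1, u ^ (a - 1) * (1 - u) ^ (b - 1) : ℝ) : ℂ)
      = ∫ u in Set.Ioo (0 : ℝ) 1, ((u ^ (a - 1) * (1 - u) ^ (b - 1) : ℝ) : ℂ) from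
      (integral_ofReal (𝕜 := ℂ)).symm]
    refine MeasureTheory.setIntegral_congr_fun measurableSet_Ioo ?_
    intro u hu
    obtain ⟨hu0, hu1⟩ := hu
    have h1u : (0:ℝ) ≤ 1 - u := by linarith
    simp only [Complex.ofReal_mul, Complex.ofReal_cpow hu0.le, Complex.ofReal_cpow h1u]
    push_cast
    ring
  have hGab : Complex.Gamma ((a : ℂ) + b) ≠ 0 := by
    rw [show ((a:ℂ) + b) = ((a + b : ℝ) : ℂ) by push_cast; ring, Complex.Gamma_ofReal]
    exact_mod_cast Real.Gamma_ne_zero (fun m => by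
      have : (0:ℝ) ≤ m := Nat.cast_nonneg m
      intro h; linarith)
  have hB : Complex.betaIntegral a b
      = Complex.Gamma a * Complex.Gamma b / Complex.Gamma ((a : ℂ) + b) := by
    rw [eq_div_iff hGab, hC]; ring
  have : ((∫ u in Set.Ioo (0 : ℝ) 1, u ^ (a - 1) * (1 - u) ^ (b - 1) : ℝ) : ℂ)
      = ((Real.Gamma a * Real.Gamma b / Real.Gamma (a + b) : ℝ) : ℂ) := by
    rw [← hbeta, hB,
      show ((a:ℂ) + b) = ((a + b : ℝ) : ℂ) by push_cast; ring,
      Complex.Gamma_ofReal, Complex.Gamma_ofReal, Complex.Gamma_ofReal]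
    norm_cast
  exact_mod_cast this

/-- For `α ∈ (0,2)` and `x < 0`, `y ↦ u_α(x,y)` is a probability density on `ℝ`, i.e.
`∫₀^∞ (sin(απ/2)/π) (y-x)⁻¹ (-x/y)^{α/2} dy = 1`. -/
theorem overshoot_density_integrates_to_one
    (α : ℝ) (hα : α ∈ Set.Ioo (0 : ℝ) 2) (x : ℝ) (hx : x < 0) :
    ∫ y in Set.Ioi (0 : ℝ), (Real.sin (α * π / 2) / π) * (y - x)⁻¹ * (-x / y) ^ (α / 2) = 1 := by
  obtain ⟨hα0, hα2⟩ := hα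
  set c : ℝ := α / 2 with hc
  have hc0 : 0 < c := by positivity
  have hc1 : c < 1 := by rw [hc]; linarith
  set s : ℝ := -x with hs
  have hs0 : 0 < s := by simpa [hs] using hx
  set φ : ℝ → ℝ := fun u => s * u / (1 - u) with hφ
  have himg : φ '' Set.Ioo 0 1 = Set.Ioi (0 : ℝ) := by
    ext y
    constructor
    · rintro ⟨u, ⟨hu0, hu1⟩, rfl⟩
      have h1u : (0:ℝ) < 1 - u := by linarith
      exact Set.mem_Ioi.2 (div_pos (mul_pos hs0 hu0) h1u)
    · intro hy
      have hy0 : 0 < y := hy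
      have hys : (0:ℝ) < y + s := add_pos hy0 hs0
      refine ⟨y / (y + s), ⟨by positivity, ?_⟩, ?_⟩
      · rw [div_lt_one hys]; linarith
      · have h1 : 1 - y / (y + s) = s / (y + s) := by field_simp; ring
        simp only [hφ, h1]
        field_simp
  have hderiv : ∀ u ∈ Set.Ioo (0:ℝ) 1,
      HasDerivWithinAt φ (s / (1 - u) ^ 2) (Set.Ioo 0 1) u := by
    intro u hu
    have h1u : (1:ℝ) - u ≠ 0 := by have := hu.2; intro h; rw [sub_eq_zero] at h; linarith
    have hd := ((hasDerivAt_id u).const_mul s).div ((hasDerivAt_id u).const_sub 1) h1u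
    simp only [id_eq, Pi.div_def] at hd
    rw [hφ]
    refine hd.hasDerivWithinAt.congr_deriv ?_
    ring
  have hinj : Set.InjOn φ (Set.Ioo 0 1) := by
    intro u hu v hv h
    have h1u : (1:ℝ) - u ≠ 0 := by have := hu.2; intro h'; rw [sub_eq_zero] at h'; linarith
    have h1v : (1:ℝ) - v ≠ 0 := by have := hv.2; intro h'; rw [sub_eq_zero] at h'; linarith
    simp only [hφ, div_eq_div_iff h1u h1v] at h
    have h2 : s * u = s * v := by linear_combination h
    exact mul_left_cancel₀ (ne_of_gt hs0) h2
  have key : ∫ y in Set.Ioi (0 : ℝ), (y - x)⁻¹ * (-x / y) ^ c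
      = ∫ u in Set.Ioo (0:ℝ) 1, u ^ ((1 - c) - 1) * (1 - u) ^ (c - 1) := by
    rw [← himg, MeasureTheory.integral_image_eq_integral_abs_deriv_smul
      measurableSet_Ioo hderiv hinj]
    refine MeasureTheory.setIntegral_congr_fun measurableSet_Ioo ?_
    intro u hu
    obtain ⟨hu0, hu1⟩ := hu
    have h1u : (0:ℝ) < 1 - u := by linarith
    have h1une : (1:ℝ) - u ≠ 0 := ne_of_gt h1u
    have hune : u ≠ 0 := ne_of_gt hu0
    have hφu : φ u = s * u / (1 - u) := rfl
    have hφpos : 0 < φ u := by rw [hφu]; exact div_pos (mul_pos hs0 hu0) h1u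
    have h1 : φ u - x = s / (1 - u) := by
      rw [hφu, hs]; field_simp; ring
    have h2 : -x / φ u = (1 - u) / u := by
      rw [hφu, ← hs]; field_simp
    have habs : |s / (1 - u) ^ 2| = s / (1 - u) ^ 2 :=
      abs_of_pos (div_pos hs0 (by positivity))
    simp only [smul_eq_mul]
    rw [habs, h1, h2]
    rw [Real.div_rpow h1u.le hu0.le]
    rw [show (1:ℝ) - c - 1 = -c by ring, Real.rpow_neg hu0.le]
    rw [Real.rpow_sub_one h1une]
    have huc : u ^ c ≠ 0 := (Real.rpow_pos_of_pos hu0 c).ne'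
    field_simp
  have hbeta := real_beta_integral (a := 1 - c) (b := c) (by linarith) hc0
  have hsum : (1 - c) + c = 1 := by ring
  have hsin : Real.sin (α * π / 2) = Real.sin (π * c) := by
    rw [hc]; ring_nf
  have hrefl : Real.Gamma c * Real.Gamma (1 - c) = π / Real.sin (π * c) :=
    Real.Gamma_mul_Gamma_one_sub c
  have hsinpos : 0 < Real.sin (π * c) := by
    apply Real.sin_pos_of_pos_of_lt_pi
    · positivity
    · calc π * c < π * 1 := mul_lt_mul_of_pos_left hc1 Real.pi_pos
        _ = π := mul_one π
  have hI : ∫ y in Set.Ioi (0 : ℝ), (y - x)⁻¹ * (-x / y) ^ c = π / Real.sin (π * c) := by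
    rw [key, hbeta, hsum, Real.Gamma_one, div_one, mul_comm, hrefl]
  calc ∫ y in Set.Ioi (0 : ℝ), (Real.sin (α * π / 2) / π) * (y - x)⁻¹ * (-x / y) ^ c
      = (Real.sin (α * π / 2) / π) * ∫ y in Set.Ioi (0 : ℝ), (y - x)⁻¹ * (-x / y) ^ c := by
        simp_rw [mul_assoc]
        rw [MeasureTheory.integral_const_mul]
    _ = (Real.sin (π * c) / π) * (π / Real.sin (π * c)) := by rw [hI, hsin]
    _ = 1 := by field_simp
end

section
/- Let α, β ∈ (0,2) and r ∈ ℝ with (max(α,β))/2 − 1 < r < (min(α,β))/2. Then ∫₀^∞ ∫₀^∞ (x·y)^r · u_α(−1,x) · u_β(−1,y) dx dy = [sin(απ/2)·sin(βπ/2)] / [sin((α−2r)π/2)·sin((β−2r)π/2)]. -/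
open MeasureTheory Real Set

lemma image_div_one_sub : (fun t : ℝ => t / (1 - t)) '' Ioo 0 1 = Ioi 0 := by
  ext y
  constructor
  · rintro ⟨t, ⟨ht0, ht1⟩, rfl⟩
    exact div_pos ht0 (by linarith)
  · intro hy
    refine ⟨y / (1 + y), ⟨div_pos hy (by linarith [hy.out]), ?_⟩, ?_⟩
    · rw [div_lt_one (by linarith [hy.out])]; linarith [hy.out]
    · have h1 : (1 : ℝ) + y ≠ 0 := by linarith [hy.out]
      field_simp
      ring

lemma mellin_one_add_inv {s : ℝ} (hs0 : 0 < s) (hs1 : s < 1) :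
    ∫ x in Ioi (0 : ℝ), x ^ (s - 1) * (1 + x)⁻¹ = π / Real.sin (π * s) := by
  have hderiv : ∀ t ∈ Ioo (0:ℝ) 1,
      HasDerivWithinAt (fun t : ℝ => t / (1 - t)) (((1 - t) ^ 2)⁻¹) (Ioo 0 1) t := by
    intro t ht
    have hne : (1 : ℝ) - t ≠ 0 := by linarith [ht.2]
    have := (hasDerivAt_id t).div ((hasDerivAt_id t).const_sub 1) hne
    convert this.hasDerivWithinAt using 1
    show ((1 - t) ^ 2)⁻¹ = (1 * (1 - t) - t * -1) / (1 - t) ^ 2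
    rw [eq_div_iff (pow_ne_zero 2 hne), inv_mul_cancel₀ (pow_ne_zero 2 hne)]; ring
    all_goals rfl
  have hinj : InjOn (fun t : ℝ => t / (1 - t)) (Ioo 0 1) := by
    intro a ha b hb hab
    have h1 : (1:ℝ) - a ≠ 0 := by linarith [ha.2]
    have h2 : (1:ℝ) - b ≠ 0 := by linarith [hb.2]
    field_simp at hab
    linarith
  have key := MeasureTheory.integral_image_eq_integral_abs_deriv_smul measurableSet_Ioo
    hderiv hinj (fun x => x ^ (s - 1) * (1 + x)⁻¹)
  rw [image_div_one_sub] at key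
  rw [key]
  have congr1 : ∫ t in Ioo (0:ℝ) 1, |((1 - t) ^ 2)⁻¹| •
      ((t / (1 - t)) ^ (s - 1) * (1 + t / (1 - t))⁻¹)
      = ∫ t in Ioo (0:ℝ) 1, t ^ (s - 1) * (1 - t) ^ (-s) := by
    refine setIntegral_congr_fun measurableSet_Ioo (fun t ht => ?_)
    have h0 : (0:ℝ) < t := ht.1
    have h1 : (0:ℝ) < 1 - t := by linarith [ht.2]
    have hne := h1.ne'
    have habs : |((1 - t) ^ 2)⁻¹| = ((1 - t) ^ 2)⁻¹ := abs_of_pos (by positivity)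
    have hsum : 1 + t / (1 - t) = (1 - t)⁻¹ := by field_simp; ring
    rw [smul_eq_mul, habs, hsum, div_rpow h0.le h1.le, inv_inv]
    rw [show ((1-t)^2)⁻¹ = (1-t)^(-2:ℝ) by
      rw [← Real.rpow_natCast (1-t) 2, ← Real.rpow_neg h1.le]; norm_num]
    rw [div_eq_mul_inv, ← Real.rpow_neg h1.le]
    have e : (1-t)^(-2:ℝ) * ((1-t)^(-(s-1)) * (1-t)^(1:ℝ)) = (1-t)^(-s) := by
      rw [← Real.rpow_add h1, ← Real.rpow_add h1]; congr 1; ring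
    calc (1-t)^(-2:ℝ) * (t^(s-1) * (1-t)^(-(s-1)) * (1-t))
        = t^(s-1) * ((1-t)^(-2:ℝ) * ((1-t)^(-(s-1)) * (1-t)^(1:ℝ))) := by
          rw [Real.rpow_one]; ring
      _ = t^(s-1) * (1-t)^(-s) := by rw [e]
  rw [congr1]
  -- identify with the Beta integral
  have hJ : ((∫ t in Ioo (0:ℝ) 1, t ^ (s - 1) * (1 - t) ^ (-s) : ℝ) : ℂ)
      = Complex.betaIntegral s (1 - s) := by
    rw [Complex.betaIntegral]
    rw [intervalIntegral.integral_of_le zero_le_one, ← MeasureTheory.integral_Ioc_eq_integral_Ioo]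
    refine (integral_ofReal (𝕜 := ℂ)).symm.trans ?_
    refine setIntegral_congr_fun measurableSet_Ioc (fun t ht => ?_)
    have h0 : (0:ℝ) ≤ t := ht.1.le
    have h1 : (0:ℝ) ≤ 1 - t := by linarith [ht.2]
    have e1 : ((s:ℂ) - 1) = ((s - 1 : ℝ) : ℂ) := by push_cast; ring
    have e2 : ((1:ℂ) - (s:ℂ) - 1) = ((-s : ℝ) : ℂ) := by push_cast; ring
    have e3 : ((1:ℂ) - (t:ℂ)) = ((1 - t : ℝ) : ℂ) := by push_cast; ring
    rw [e1, e2, e3, ← Complex.ofReal_cpow h0, ← Complex.ofReal_cpow h1]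
    exact Complex.ofReal_mul _ _
  have hbeta : Complex.betaIntegral s (1 - s) = (π : ℂ) / Complex.sin (π * s) := by
    have h1 : (0:ℝ) < s := hs0
    have hre : 0 < Complex.re (s : ℂ) := by simpa using hs0
    have hre2 : 0 < Complex.re (1 - (s:ℂ)) := by
      simp only [Complex.sub_re, Complex.one_re, Complex.ofReal_re]; linarith
    have := Complex.Gamma_mul_Gamma_eq_betaIntegral hre hre2
    rw [show (s:ℂ) + (1 - s) = 1 by ring, Complex.Gamma_one, one_mul] at this
    rw [← this, Complex.Gamma_mul_Gamma_one_sub]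
  rw [hbeta] at hJ
  have : ((∫ t in Ioo (0:ℝ) 1, t ^ (s - 1) * (1 - t) ^ (-s) : ℝ) : ℂ)
      = ((π / Real.sin (π * s) : ℝ) : ℂ) := by
    rw [hJ]; push_cast [Complex.ofReal_sin]; ring
  exact_mod_cast this


lemma single_moment {α r : ℝ} (hα0 : 0 < α) (h1 : α / 2 - 1 < r) (h2 : r < α / 2) :
    ∫ x in Ioi (0 : ℝ), x ^ r * uDens α (-1) x
      = Real.sin (α * π / 2) / Real.sin ((α - 2 * r) * π / 2) := by
  have hs0 : 0 < r - α / 2 + 1 := by linarith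
  have hs1 : r - α / 2 + 1 < 1 := by linarith
  have hcongr : ∫ x in Ioi (0 : ℝ), x ^ r * uDens α (-1) x
      = ∫ x in Ioi (0 : ℝ), (Real.sin (α * π / 2) / π) *
          (x ^ (r - α / 2 + 1 - 1) * (1 + x)⁻¹) := by
    refine setIntegral_congr_fun measurableSet_Ioi (fun x hx => ?_)
    have hx0 : (0 : ℝ) < x := hx
    rw [uDens, Set.indicator_of_mem (show x ∈ Ici (0:ℝ) from le_of_lt hx0)]
    have e1 : -(-1 : ℝ) / x = x⁻¹ := by norm_num
    have e2 : (x⁻¹ : ℝ) ^ (α / 2) = x ^ (-(α / 2)) := by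
      rw [← Real.rpow_neg_one x, ← Real.rpow_mul hx0.le]
      norm_num
    have e3 : x ^ r * x ^ (-(α / 2)) = x ^ (r - α / 2 + 1 - 1) := by
      rw [← Real.rpow_add hx0]; congr 1; ring
    rw [e1, e2]
    rw [show x - (-1 : ℝ) = 1 + x by ring]
    calc x ^ r * (Real.sin (α * π / 2) / π * (1 + x)⁻¹ * x ^ (-(α / 2)))
        = Real.sin (α * π / 2) / π * ((x ^ r * x ^ (-(α / 2))) * (1 + x)⁻¹) := by ring
      _ = Real.sin (α * π / 2) / π * (x ^ (r - α / 2 + 1 - 1) * (1 + x)⁻¹) := by rw [e3]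
  rw [hcongr, MeasureTheory.integral_const_mul, mellin_one_add_inv hs0 hs1]
  have hsin : Real.sin (π * (r - α / 2 + 1)) = Real.sin ((α - 2 * r) * π / 2) := by
    rw [show π * (r - α / 2 + 1) = π * (r - α / 2) + π by ring, Real.sin_add_pi,
      ← Real.sin_neg]
    congr 1; ring
  rw [hsin]
  field_simp


/-- For `α, β ∈ (0,2)` and `max(α,β)/2 - 1 < r < min(α,β)/2`,
`∫₀^∞ ∫₀^∞ (xy)^r u_α(-1,x) u_β(-1,y) dx dy
  = sin(απ/2) sin(βπ/2) / (sin((α-2r)π/2) sin((β-2r)π/2))`. -/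
theorem overshoot_product_moment
    (α β r : ℝ) (hα : α ∈ Set.Ioo (0 : ℝ) 2) (hβ : β ∈ Set.Ioo (0 : ℝ) 2)
    (hr1 : max α β / 2 - 1 < r) (hr2 : r < min α β / 2) :
    ∫ y in Set.Ioi (0 : ℝ), ∫ x in Set.Ioi (0 : ℝ),
        (x * y) ^ r * uDens α (-1) x * uDens β (-1) y
      = Real.sin (α * π / 2) * Real.sin (β * π / 2)
          / (Real.sin ((α - 2 * r) * π / 2) * Real.sin ((β - 2 * r) * π / 2)) := by
  have hα1 : α / 2 - 1 < r := by
    have := le_max_left α β; linarith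
  have hα2 : r < α / 2 := by
    have := min_le_left α β; linarith
  have hβ1 : β / 2 - 1 < r := by
    have := le_max_right α β; linarith
  have hβ2 : r < β / 2 := by
    have := min_le_right α β; linarith
  have Iα := single_moment hα.1 hα1 hα2
  have Iβ := single_moment hβ.1 hβ1 hβ2
  have inner_eq : ∀ y ∈ Ioi (0 : ℝ),
      (∫ x in Ioi (0 : ℝ), (x * y) ^ r * uDens α (-1) x * uDens β (-1) y)
        = (y ^ r * uDens β (-1) y) *
            (Real.sin (α * π / 2) / Real.sin ((α - 2 * r) * π / 2)) := by
    intro y hy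
    have hy0 : (0 : ℝ) < y := hy
    have step : (∫ x in Ioi (0 : ℝ), (x * y) ^ r * uDens α (-1) x * uDens β (-1) y)
        = ∫ x in Ioi (0 : ℝ), (y ^ r * uDens β (-1) y) * (x ^ r * uDens α (-1) x) := by
      refine setIntegral_congr_fun measurableSet_Ioi (fun x hx => ?_)
      have hx0 : (0 : ℝ) < x := hx
      rw [Real.mul_rpow hx0.le hy0.le]; ring
    rw [step, MeasureTheory.integral_const_mul, Iα]
  calc ∫ y in Set.Ioi (0 : ℝ), ∫ x in Set.Ioi (0 : ℝ),
        (x * y) ^ r * uDens α (-1) x * uDens β (-1) y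
      = ∫ y in Set.Ioi (0 : ℝ), (y ^ r * uDens β (-1) y) *
          (Real.sin (α * π / 2) / Real.sin ((α - 2 * r) * π / 2)) :=
        setIntegral_congr_fun measurableSet_Ioi inner_eq
    _ = (∫ y in Set.Ioi (0 : ℝ), y ^ r * uDens β (-1) y) *
          (Real.sin (α * π / 2) / Real.sin ((α - 2 * r) * π / 2)) :=
        MeasureTheory.integral_mul_const _ _
    _ = Real.sin (α * π / 2) * Real.sin (β * π / 2)
          / (Real.sin ((α - 2 * r) * π / 2) * Real.sin ((β - 2 * r) * π / 2)) := by
      rw [Iβ, div_mul_div_comm]; ring_nf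
end

section
/- Let α, β ∈ (0,2) and r ∈ ℝ with r ≥ (min(α,β))/2 or r ≤ (max(α,β))/2 − 1. Then the function (x,y) ↦ (x·y)^r · u_α(−1,x) · u_β(−1,y) is not Lebesgue integrable on (0,∞)×(0,∞); equivalently, the corresponding double Lebesgue integral equals ∞. -/
open MeasureTheory Real Set

lemma uDens_sin_pos {α : ℝ} (hα : α ∈ Set.Ioo (0 : ℝ) 2) : 0 < Real.sin (α * π / 2) := by
  have hπ := Real.pi_pos
  apply Real.sin_pos_of_pos_of_lt_pi
  · nlinarith [hα.1]
  · nlinarith [hα.2]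

lemma uDens_nonneg {α : ℝ} (hα : α ∈ Set.Ioo (0 : ℝ) 2) (y : ℝ) : 0 ≤ uDens α (-1) y := by
  unfold uDens
  apply Set.indicator_nonneg
  intro z hz
  have hz0 : (0:ℝ) ≤ z := hz
  have h1 : 0 ≤ Real.sin (α * π / 2) / π := div_nonneg (uDens_sin_pos hα).le Real.pi_pos.le
  have h2 : (0:ℝ) ≤ (z - (-1))⁻¹ := by
    apply inv_nonneg.mpr; linarith
  have h3 : (0:ℝ) ≤ (-(-1) / z) ^ (α / 2) :=
    Real.rpow_nonneg (by positivity) _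
  positivity

lemma uDens_eq {α : ℝ} {x : ℝ} (hx : 0 < x) :
    uDens α (-1) x = (Real.sin (α * π / 2) / π) * (x + 1)⁻¹ * x ^ (-(α / 2)) := by
  unfold uDens
  rw [Set.indicator_of_mem (Set.mem_Ici.mpr hx.le)]
  have h1 : -(-1 : ℝ) / x = x⁻¹ := by field_simp
  rw [h1, Real.inv_rpow hx.le, ← Real.rpow_neg hx.le]
  ring_nf

lemma uDens_pos {α : ℝ} (hα : α ∈ Set.Ioo (0 : ℝ) 2) {x : ℝ} (hx : 0 < x) :
    0 < uDens α (-1) x := by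
  rw [uDens_eq hx]
  have h1 : 0 < Real.sin (α * π / 2) / π := div_pos (uDens_sin_pos hα) Real.pi_pos
  have h2 : (0:ℝ) < (x + 1)⁻¹ := by positivity
  have h3 : (0:ℝ) < x ^ (-(α / 2)) := Real.rpow_pos_of_pos hx _
  positivity

lemma uDens_measurable (α : ℝ) : Measurable (uDens α (-1)) := by
  unfold uDens
  apply Measurable.indicator _ measurableSet_Ici
  fun_prop

lemma g_measurable (α r : ℝ) : Measurable (fun x : ℝ => x ^ r * uDens α (-1) x) :=
  ((by fun_prop : Measurable fun x : ℝ => x ^ r).mul (uDens_measurable α))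

lemma g_nonneg {α : ℝ} (hα : α ∈ Set.Ioo (0 : ℝ) 2) (r : ℝ) (x : ℝ) :
    0 ≤ x ^ r * uDens α (-1) x := by
  rcases le_or_gt 0 x with hx | hx
  · exact mul_nonneg (Real.rpow_nonneg hx r) (uDens_nonneg hα x)
  · have : uDens α (-1) x = 0 := by
      unfold uDens
      exact Set.indicator_of_notMem (by simpa using not_le.mpr hx) _
    simp [this]

lemma g_eq {α : ℝ} (r : ℝ) {x : ℝ} (hx : 0 < x) :
    x ^ r * uDens α (-1) x
      = (Real.sin (α * π / 2) / π) * (x ^ (r - α / 2) * (x + 1)⁻¹) := by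
  rw [uDens_eq hx, show r - α / 2 = r + -(α / 2) by ring, Real.rpow_add hx]
  ring

/-- The one-dimensional moment integral diverges when `r ≥ α/2` or `r ≤ α/2 - 1`. -/
lemma lint_top {α : ℝ} (hα : α ∈ Set.Ioo (0 : ℝ) 2) {r : ℝ}
    (h : α / 2 ≤ r ∨ r ≤ α / 2 - 1) :
    ∫⁻ x in Set.Ioi (0 : ℝ), ENNReal.ofReal (x ^ r * uDens α (-1) x) = ⊤ := by
  by_contra hfin
  set c : ℝ := Real.sin (α * π / 2) / π with hc_def
  have hc : 0 < c := div_pos (uDens_sin_pos hα) Real.pi_pos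
  have hint : IntegrableOn (fun x : ℝ => x ^ r * uDens α (-1) x) (Set.Ioi 0) :=
    (lintegral_ofReal_ne_top_iff_integrable
      (g_measurable α r).aestronglyMeasurable
      (Filter.Eventually.of_forall (g_nonneg hα r))).mp hfin
  have h2 : IntegrableOn (fun x : ℝ => c⁻¹ * (x ^ r * uDens α (-1) x)) (Set.Ioi 0) :=
    hint.const_mul _
  have heq : ∀ x ∈ Set.Ioi (0:ℝ),
      c⁻¹ * (x ^ r * uDens α (-1) x) = x ^ (r - α / 2) * (x + 1)⁻¹ := by
    intro x hx
    rw [g_eq r hx, ← hc_def, ← mul_assoc, inv_mul_cancel₀ hc.ne', one_mul]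
  rcases h with hs | hs
  · -- divergence at infinity
    have h3 : IntegrableOn (fun x : ℝ => x ^ (r - α / 2) * (x + 1)⁻¹) (Set.Ioi 1) := by
      refine IntegrableOn.congr_fun (h2.mono_set (Set.Ioi_subset_Ioi zero_le_one))
        (fun x hx => heq x (Set.mem_Ioi.mpr (lt_trans zero_lt_one hx))) measurableSet_Ioi
    have h4 : IntegrableOn (fun x : ℝ => x ^ (-1 : ℝ)) (Set.Ioi 1) := by
      refine Integrable.mono (h3.const_mul 2)
        (by fun_prop : Measurable fun x : ℝ => x ^ (-1:ℝ)).aestronglyMeasurable ?_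
      rw [ae_restrict_iff' measurableSet_Ioi]
      refine Filter.Eventually.of_forall fun x hx => ?_
      have hx1 : (1:ℝ) < x := hx
      have hx0 : (0:ℝ) < x := lt_trans zero_lt_one hx1
      have hA : (1:ℝ) ≤ x ^ (r - α / 2) := Real.one_le_rpow hx1.le (by linarith)
      have hB : (2 * x)⁻¹ ≤ (x + 1)⁻¹ := by
        apply inv_anti₀ (by positivity) (by linarith)
      have hpos : 0 ≤ x ^ (r - α / 2) * (x + 1)⁻¹ :=
        mul_nonneg (Real.rpow_nonneg hx0.le _) (by positivity)
      rw [Real.norm_eq_abs, Real.norm_eq_abs, Real.rpow_neg_one,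
        abs_of_nonneg (by positivity : (0:ℝ) ≤ x⁻¹),
        abs_of_nonneg (by positivity : (0:ℝ) ≤ 2 * (x ^ (r - α / 2) * (x + 1)⁻¹))]
      calc x⁻¹ = 2 * (2 * x)⁻¹ := by field_simp
        _ ≤ 2 * (x + 1)⁻¹ := by linarith
        _ ≤ 2 * (x ^ (r - α / 2) * (x + 1)⁻¹) := by
            have : (x + 1)⁻¹ ≤ x ^ (r - α / 2) * (x + 1)⁻¹ := by
              nlinarith [inv_nonneg.mpr (by linarith : (0:ℝ) ≤ x + 1)]
            linarith
    rw [integrableOn_Ioi_rpow_iff zero_lt_one] at h4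
    linarith
  · -- divergence at zero
    have h3 : IntegrableOn (fun x : ℝ => x ^ (r - α / 2) * (x + 1)⁻¹) (Set.Ioo 0 1) := by
      refine IntegrableOn.congr_fun (h2.mono_set Set.Ioo_subset_Ioi_self)
        (fun x hx => heq x hx.1) measurableSet_Ioo
    have h4 : IntegrableOn (fun x : ℝ => x ^ (-1 : ℝ)) (Set.Ioo 0 1) := by
      refine Integrable.mono (h3.const_mul 2)
        (by fun_prop : Measurable fun x : ℝ => x ^ (-1:ℝ)).aestronglyMeasurable ?_
      rw [ae_restrict_iff' measurableSet_Ioo]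
      refine Filter.Eventually.of_forall fun x hx => ?_
      have hx0 : (0:ℝ) < x := hx.1
      have hx1 : x < 1 := hx.2
      have hA : x ^ (-1 : ℝ) ≤ x ^ (r - α / 2) :=
        Real.rpow_le_rpow_of_exponent_ge hx0 hx1.le (by linarith)
      have hB : (2:ℝ)⁻¹ ≤ (x + 1)⁻¹ := by
        apply inv_anti₀ (by positivity) (by linarith)
      have hpos : (0:ℝ) < x ^ (-1 : ℝ) := Real.rpow_pos_of_pos hx0 _
      rw [Real.norm_eq_abs, Real.norm_eq_abs,
        abs_of_nonneg hpos.le,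
        abs_of_nonneg (by positivity : (0:ℝ) ≤ 2 * (x ^ (r - α / 2) * (x + 1)⁻¹))]
      calc x ^ (-1:ℝ) = 2 * (x ^ (-1:ℝ) * 2⁻¹) := by ring
        _ ≤ 2 * (x ^ (r - α / 2) * (x + 1)⁻¹) := by
            have h5 : x ^ (-1:ℝ) * 2⁻¹ ≤ x ^ (r - α / 2) * (x + 1)⁻¹ := by
              apply mul_le_mul hA hB (by norm_num)
              exact Real.rpow_nonneg hx0.le _
            linarith
    rw [intervalIntegral.integrableOn_Ioo_rpow_iff zero_lt_one] at h4
    linarith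

lemma lint_pos {α : ℝ} (hα : α ∈ Set.Ioo (0 : ℝ) 2) (r : ℝ) :
    0 < ∫⁻ x in Set.Ioi (0 : ℝ), ENNReal.ofReal (x ^ r * uDens α (-1) x) := by
  rw [lintegral_pos_iff_support ((g_measurable α r).ennreal_ofReal)]
  have h1 : Set.Ioi (0:ℝ) ⊆
      Function.support (fun x => ENNReal.ofReal (x ^ r * uDens α (-1) x)) := by
    intro x hx
    have : 0 < x ^ r * uDens α (-1) x :=
      mul_pos (Real.rpow_pos_of_pos hx r) (uDens_pos hα hx)
    exact (ENNReal.ofReal_pos.mpr this).ne'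
  calc (0:ENNReal) < volume.restrict (Set.Ioi (0:ℝ)) (Set.Ioi 0) := by
        rw [Measure.restrict_apply_self]; simp [Real.volume_Ioi]
    _ ≤ _ := measure_mono h1

/-- For `α, β ∈ (0,2)` and `r ≥ min(α,β)/2` or `r ≤ max(α,β)/2 - 1`, the function
`(x,y) ↦ (xy)^r u_α(-1,x) u_β(-1,y)` is not Lebesgue integrable on `(0,∞)×(0,∞)`;
equivalently the corresponding (extended-real-valued) double Lebesgue integral is infinite. -/
theorem overshoot_product_moment_infinite
    (α β r : ℝ) (hα : α ∈ Set.Ioo (0 : ℝ) 2) (hβ : β ∈ Set.Ioo (0 : ℝ) 2)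
    (hr : min α β / 2 ≤ r ∨ r ≤ max α β / 2 - 1) :
    ¬ MeasureTheory.IntegrableOn
        (fun p : ℝ × ℝ => (p.1 * p.2) ^ r * uDens α (-1) p.1 * uDens β (-1) p.2)
        (Set.Ioi (0 : ℝ) ×ˢ Set.Ioi (0 : ℝ)) ∧
    ∫⁻ p : ℝ × ℝ in Set.Ioi (0 : ℝ) ×ˢ Set.Ioi (0 : ℝ),
        ENNReal.ofReal ((p.1 * p.2) ^ r * uDens α (-1) p.1 * uDens β (-1) p.2) = ⊤ := by
  have hfnn : ∀ p : ℝ × ℝ,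
      0 ≤ (p.1 * p.2) ^ r * uDens α (-1) p.1 * uDens β (-1) p.2 := by
    intro p
    rcases le_or_gt 0 p.1 with h1 | h1
    · rcases le_or_gt 0 p.2 with h2 | h2
      · exact mul_nonneg (mul_nonneg (Real.rpow_nonneg (mul_nonneg h1 h2) r)
          (uDens_nonneg hα _)) (uDens_nonneg hβ _)
      · have : uDens β (-1) p.2 = 0 := by
          unfold uDens; exact Set.indicator_of_notMem (by simpa using not_le.mpr h2) _
        simp [this]
    · have : uDens α (-1) p.1 = 0 := by
        unfold uDens; exact Set.indicator_of_notMem (by simpa using not_le.mpr h1) _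
      simp [this]
  have key : ∫⁻ p : ℝ × ℝ in Set.Ioi (0 : ℝ) ×ˢ Set.Ioi (0 : ℝ),
        ENNReal.ofReal ((p.1 * p.2) ^ r * uDens α (-1) p.1 * uDens β (-1) p.2) = ⊤ := by
    have step1 : ∫⁻ p : ℝ × ℝ in Set.Ioi (0 : ℝ) ×ˢ Set.Ioi (0 : ℝ),
        ENNReal.ofReal ((p.1 * p.2) ^ r * uDens α (-1) p.1 * uDens β (-1) p.2)
        = ∫⁻ p : ℝ × ℝ in Set.Ioi (0 : ℝ) ×ˢ Set.Ioi (0 : ℝ),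
            ENNReal.ofReal (p.1 ^ r * uDens α (-1) p.1)
              * ENNReal.ofReal (p.2 ^ r * uDens β (-1) p.2) := by
      refine setLIntegral_congr_fun (measurableSet_Ioi.prod measurableSet_Ioi)
        (fun p hp => ?_)
      obtain ⟨hx, hy⟩ := hp
      have hx0 : (0:ℝ) < p.1 := hx
      have hy0 : (0:ℝ) < p.2 := hy
      rw [← ENNReal.ofReal_mul (g_nonneg hα r p.1)]
      congr 1
      rw [Real.mul_rpow hx0.le hy0.le]
      ring
    rw [step1, Measure.volume_eq_prod, ← Measure.prod_restrict,
      lintegral_prod_mul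
        ((g_measurable α r).ennreal_ofReal.aemeasurable)
        ((g_measurable β r).ennreal_ofReal.aemeasurable)]
    have hApos := lint_pos hα r
    have hBpos := lint_pos hβ r
    rcases hr with hr | hr
    · rcases le_total α β with hab | hab
      · rw [min_eq_left hab] at hr
        rw [lint_top hα (Or.inl hr)]
        exact ENNReal.top_mul hBpos.ne'
      · rw [min_eq_right hab] at hr
        rw [lint_top hβ (Or.inl hr)]
        exact ENNReal.mul_top hApos.ne'
    · rcases le_total α β with hab | hab
      · rw [max_eq_right hab] at hr
        rw [lint_top hβ (Or.inr (by linarith))]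
        exact ENNReal.mul_top hApos.ne'
      · rw [max_eq_left hab] at hr
        rw [lint_top hα (Or.inr (by linarith))]
        exact ENNReal.top_mul hBpos.ne'
  refine ⟨fun hint => ?_, key⟩
  exact (lintegral_ofReal_ne_top_iff_integrable hint.aestronglyMeasurable
    (Filter.Eventually.of_forall hfnn)).mpr hint key
end

section
/- Let α, β ∈ (0,2) with α + β ≠ 2 and set r* := (α+β)/4 − 1/2. Then r* < 0 if α + β < 2, r* > 0 if α + β > 2, and in both cases ∫₀^∞ ∫₀^∞ (x·y)^{r*} · u_α(−1,x) · u_β(−1,y) dx dy < 1. -/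
open MeasureTheory Real Set

lemma beta_aux (s : ℝ) (h0 : 0 < s) (h1 : s < 1) :
    ∫ t in Set.Ioo (0:ℝ) 1, t ^ (s - 1) * (1 - t) ^ (-s) = π / Real.sin (π * s) := by
  have hs : 0 < (s : ℂ).re := by simpa using h0
  have ht : 0 < ((1 : ℂ) - s).re := by simp [h1]
  have hB := Complex.Gamma_mul_Gamma_eq_betaIntegral hs ht
  have hrefl := Complex.Gamma_mul_Gamma_one_sub (s : ℂ)
  have hsum : (s : ℂ) + (1 - s) = 1 := by ring
  rw [hsum, Complex.Gamma_one, one_mul] at hB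
  have hbeta : Complex.betaIntegral s (1 - s) = (π : ℂ) / Complex.sin (π * s) := by
    rw [← hB, hrefl]
  have hcast : Complex.betaIntegral s (1 - s)
      = ((∫ t in (0:ℝ)..1, t ^ (s - 1) * (1 - t) ^ (-s) : ℝ) : ℂ) := by
    rw [Complex.betaIntegral, ← intervalIntegral.integral_ofReal]
    apply intervalIntegral.integral_congr
    intro x hx
    rw [Set.uIcc_of_le (by norm_num : (0:ℝ) ≤ 1)] at hx
    obtain ⟨hx0, hx1⟩ := hx
    show (x:ℂ) ^ ((s:ℂ) - 1) * (1 - (x:ℂ)) ^ ((1:ℂ) - (s:ℂ) - 1)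
        = ((x ^ (s - 1) * (1 - x) ^ (-s) : ℝ) : ℂ)
    rw [Complex.ofReal_mul, Complex.ofReal_cpow hx0, Complex.ofReal_cpow (by linarith : (0:ℝ) ≤ 1 - x)]
    push_cast
    norm_num
  have : ((∫ t in (0:ℝ)..1, t ^ (s - 1) * (1 - t) ^ (-s) : ℝ) : ℂ)
      = ((π / Real.sin (π * s) : ℝ) : ℂ) := by
    rw [← hcast, hbeta]
    push_cast [Complex.ofReal_sin]
    norm_num
  have hre := Complex.ofReal_inj.mp this
  rw [← hre, intervalIntegral.integral_of_le (by norm_num : (0:ℝ) ≤ 1),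
    MeasureTheory.integral_Ioc_eq_integral_Ioo]


lemma cov_aux (s : ℝ) :
    ∫ x in Set.Ioi (0:ℝ), x ^ (s - 1) * (1 + x)⁻¹
      = ∫ t in Set.Ioo (0:ℝ) 1, t ^ (s - 1) * (1 - t) ^ (-s) := by
  have himg : (fun t : ℝ => t / (1 - t)) '' Set.Ioo 0 1 = Set.Ioi 0 := by
    ext x
    constructor
    · rintro ⟨t, ⟨ht0, ht1⟩, rfl⟩
      exact div_pos ht0 (by linarith)
    · intro hx
      refine ⟨x / (1 + x), ⟨div_pos hx (by linarith [Set.mem_Ioi.mp hx]), by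
        rw [div_lt_one (by linarith [Set.mem_Ioi.mp hx])]; linarith [Set.mem_Ioi.mp hx]⟩, ?_⟩
      have hx0 : (0:ℝ) < x := hx
      field_simp
      ring
  have hderiv : ∀ t ∈ Set.Ioo (0:ℝ) 1,
      HasDerivWithinAt (fun t : ℝ => t / (1 - t)) (((1 - t) ^ 2)⁻¹) (Set.Ioo 0 1) t := by
    intro t ⟨ht0, ht1⟩
    have h1t : (1:ℝ) - t ≠ 0 := by linarith
    have := (hasDerivAt_id t).div ((hasDerivAt_const t (1:ℝ)).sub (hasDerivAt_id t)) h1t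
    have h2 : ((1 - t) ^ 2)⁻¹ = (1 * (1 - t) - t * (0 - 1)) / (1 - t) ^ 2 := by ring
    rw [h2]; exact this.hasDerivWithinAt
  have hinj : Set.InjOn (fun t : ℝ => t / (1 - t)) (Set.Ioo 0 1) := by
    rintro a ⟨ha0, ha1⟩ b ⟨hb0, hb1⟩ hab
    simp only at hab
    have ha : (1:ℝ) - a ≠ 0 := by linarith
    have hb : (1:ℝ) - b ≠ 0 := by linarith
    field_simp at hab
    linarith
  rw [← himg, integral_image_eq_integral_abs_deriv_smul measurableSet_Ioo hderiv hinj]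
  apply MeasureTheory.setIntegral_congr_fun measurableSet_Ioo
  intro t ⟨ht0, ht1⟩
  have hu : (0:ℝ) < 1 - t := by linarith
  have h1 : 1 + t / (1 - t) = (1 - t)⁻¹ := by field_simp; ring
  simp only [smul_eq_mul, h1, inv_inv]
  rw [Real.div_rpow ht0.le hu.le, abs_of_pos (by positivity),
    Real.rpow_sub hu, Real.rpow_one, Real.rpow_neg hu.le]
  have hus : (0:ℝ) < (1 - t) ^ s := Real.rpow_pos_of_pos hu s
  field_simp

lemma mellin_one_add (s : ℝ) (h0 : 0 < s) (h1 : s < 1) :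
    ∫ x in Set.Ioi (0:ℝ), x ^ (s - 1) * (1 + x)⁻¹ = π / Real.sin (π * s) := by
  rw [cov_aux, beta_aux s h0 h1]

lemma moment_aux (γ r : ℝ) (h0 : 0 < r - γ / 2 + 1) (h1 : r - γ / 2 + 1 < 1) :
    ∫ x in Set.Ioi (0:ℝ), x ^ r * uDens γ (-1) x
      = Real.sin (γ * π / 2) / π * (π / Real.sin (π * (r - γ / 2 + 1))) := by
  have hkey : ∫ x in Set.Ioi (0:ℝ), x ^ r * uDens γ (-1) x
      = ∫ x in Set.Ioi (0:ℝ),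
          Real.sin (γ * π / 2) / π * (x ^ (r - γ / 2 + 1 - 1) * (1 + x)⁻¹) := by
    apply MeasureTheory.setIntegral_congr_fun measurableSet_Ioi
    intro x hx
    have hx0 : (0:ℝ) < x := hx
    simp only [uDens, Set.indicator_of_mem (Set.mem_Ici.mpr hx0.le)]
    have h2 : -(-1:ℝ) / x = x⁻¹ := by field_simp
    rw [h2, Real.inv_rpow hx0.le, ← Real.rpow_neg hx0.le,
      show x - (-1:ℝ) = 1 + x from by ring,
      show r - γ / 2 + 1 - 1 = r + -(γ / 2) from by ring, Real.rpow_add hx0]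
    ring
  rw [hkey, MeasureTheory.integral_const_mul, mellin_one_add _ h0 h1]

/-- For `α, β ∈ (0,2)` with `α + β ≠ 2` and `r* = (α+β)/4 - 1/2`: `r* < 0` if `α+β < 2`,
`r* > 0` if `α+β > 2`, and in both cases
`∫₀^∞ ∫₀^∞ (xy)^{r*} u_α(-1,x) u_β(-1,y) dx dy < 1`. -/
theorem overshoot_product_moment_lt_one
    (α β : ℝ) (hα : α ∈ Set.Ioo (0 : ℝ) 2) (hβ : β ∈ Set.Ioo (0 : ℝ) 2)
    (hαβ : α + β ≠ 2) :
    (α + β < 2 → (α + β) / 4 - 1 / 2 < 0) ∧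
    (α + β > 2 → (α + β) / 4 - 1 / 2 > 0) ∧
    ∫ y in Set.Ioi (0 : ℝ), ∫ x in Set.Ioi (0 : ℝ),
        (x * y) ^ ((α + β) / 4 - 1 / 2) * uDens α (-1) x * uDens β (-1) y < 1 := by
  obtain ⟨hα0, hα2⟩ := hα
  obtain ⟨hβ0, hβ2⟩ := hβ
  refine ⟨fun h => by linarith, fun h => by linarith, ?_⟩
  have hπ : (0:ℝ) < π := Real.pi_pos
  set r : ℝ := (α + β) / 4 - 1 / 2 with hr
  have hIα : ∫ x in Set.Ioi (0:ℝ), x ^ r * uDens α (-1) x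
      = Real.sin (α * π / 2) / π * (π / Real.sin (π * (r - α / 2 + 1))) :=
    moment_aux α r (by rw [hr]; linarith) (by rw [hr]; linarith)
  have hIβ : ∫ x in Set.Ioi (0:ℝ), x ^ r * uDens β (-1) x
      = Real.sin (β * π / 2) / π * (π / Real.sin (π * (r - β / 2 + 1))) :=
    moment_aux β r (by rw [hr]; linarith) (by rw [hr]; linarith)
  have hfact : ∫ y in Set.Ioi (0 : ℝ), ∫ x in Set.Ioi (0 : ℝ),
        (x * y) ^ r * uDens α (-1) x * uDens β (-1) y
      = (∫ x in Set.Ioi (0:ℝ), x ^ r * uDens α (-1) x)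
        * (∫ y in Set.Ioi (0:ℝ), y ^ r * uDens β (-1) y) := by
    rw [← MeasureTheory.integral_const_mul]
    apply MeasureTheory.setIntegral_congr_fun measurableSet_Ioi
    intro y hy
    have hy0 : (0:ℝ) < y := hy
    simp only
    rw [← MeasureTheory.integral_mul_const]
    apply MeasureTheory.setIntegral_congr_fun measurableSet_Ioi
    intro x hx
    have hx0 : (0:ℝ) < x := hx
    simp only
    rw [Real.mul_rpow hx0.le hy0.le]
    ring
  rw [hfact, hIα, hIβ]
  have hsinα : Real.sin (π * (r - α / 2 + 1)) = Real.cos ((β - α) * π / 4) := by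
    rw [show π * (r - α / 2 + 1) = (β - α) * π / 4 + π / 2 from by rw [hr]; ring,
      Real.sin_add_pi_div_two]
  have hsinβ : Real.sin (π * (r - β / 2 + 1)) = Real.cos ((β - α) * π / 4) := by
    rw [show π * (r - β / 2 + 1) = -((β - α) * π / 4) + π / 2 from by rw [hr]; ring,
      Real.sin_add_pi_div_two, Real.cos_neg]
  have hcosθ : 0 < Real.cos ((β - α) * π / 4) := by
    apply Real.cos_pos_of_mem_Ioo
    constructor
    · nlinarith
    · nlinarith
  rw [hsinα, hsinβ]
  have hexpr : Real.sin (α * π / 2) / π * (π / Real.cos ((β - α) * π / 4))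
        * (Real.sin (β * π / 2) / π * (π / Real.cos ((β - α) * π / 4)))
      = Real.sin (α * π / 2) * Real.sin (β * π / 2) / Real.cos ((β - α) * π / 4) ^ 2 := by
    have e1 : ∀ a : ℝ, a / π * (π / Real.cos ((β - α) * π / 4))
        = a / Real.cos ((β - α) * π / 4) := fun a => by
      rw [div_mul_div_comm, mul_comm a π, mul_div_mul_left _ _ Real.pi_ne_zero]
    rw [e1, e1, div_mul_div_comm, ← sq]
  rw [hexpr, div_lt_one (by positivity)]
  have h1 : Real.cos (α * π / 2 - β * π / 2) = 2 * Real.cos ((β - α) * π / 4) ^ 2 - 1 := by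
    rw [show α * π / 2 - β * π / 2 = 2 * (-((β - α) * π / 4)) from by ring,
      Real.cos_two_mul, Real.cos_neg]
  have h2 : Real.cos (α * π / 2 - β * π / 2) - Real.cos (α * π / 2 + β * π / 2)
      = 2 * (Real.sin (α * π / 2) * Real.sin (β * π / 2)) := by
    rw [Real.cos_sub, Real.cos_add]; ring
  have h3 : -1 < Real.cos (α * π / 2 + β * π / 2) := by
    have hAB : α * π / 2 + β * π / 2 = 2 * ((α + β) * π / 4) := by ring
    have hφne : Real.cos ((α + β) * π / 4) ≠ 0 := by
      rcases lt_trichotomy ((α + β) * π / 4) (π / 2) with h | h | h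
      · exact (Real.cos_pos_of_mem_Ioo ⟨by nlinarith, h⟩).ne'
      · exact absurd (mul_right_cancel₀ Real.pi_ne_zero (by linarith)) hαβ
      · exact (Real.cos_neg_of_pi_div_two_lt_of_lt h (by nlinarith)).ne
    rw [hAB, Real.cos_two_mul]
    have : 0 < Real.cos ((α + β) * π / 4) ^ 2 := by positivity
    linarith
  linarith
end

section
/- Let α, β ∈ (0,2) with α + β = 2, and let U and V be independent real random variables with densities u_α(−1,·) and v_β(1,·) respectively. Then the random variables −U·V and (−U·V)^{−1} have the same distribution; i.e. for every s ∈ ℝ, P(−U·V ≤ s) = P((−U·V)^{−1} ≤ s). -/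
open MeasureTheory ProbabilityTheory Real Set

/-- The downwards-overshoot density
`v_α(x,y) = (sin(απ/2)/π) (x-y)⁻¹ (-x/y)^{α/2} 1_{(-∞,0]}(y)` (for `x > 0`). -/
noncomputable def vDens (α x y : ℝ) : ℝ :=
  Set.indicator (Set.Iic (0 : ℝ))
    (fun z => (Real.sin (α * π / 2) / π) * (x - z)⁻¹ * (-x / z) ^ (α / 2)) y

/-- 1-D lintegral change of variables. -/
theorem lintegral_image_aux {s : Set ℝ} {f f' : ℝ → ℝ} (hs : MeasurableSet s)
    (hf' : ∀ x ∈ s, HasDerivWithinAt f (f' x) s x) (hf : Set.InjOn f s) (g : ℝ → ENNReal) :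
    ∫⁻ x in f '' s, g x = ∫⁻ x in s, ENNReal.ofReal |f' x| * g (f x) := by
  simpa only [ContinuousLinearMap.det_toSpanSingleton] using
    lintegral_image_eq_lintegral_abs_det_fderiv_mul volume hs
      (fun x hx => (hf' x hx).hasFDerivWithinAt) hf g

theorem setLIntegral_inter_Ioi {F : ℝ → ℝ} (hF0 : ∀ x ≤ (0:ℝ), F x = 0) {A : Set ℝ}
    (hA : MeasurableSet A) :
    ∫⁻ x in A, ENNReal.ofReal (F x) = ∫⁻ x in Ioi (0:ℝ) ∩ A, ENNReal.ofReal (F x) := by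
  rw [← setLIntegral_indicator measurableSet_Ioi]
  refine lintegral_congr fun x => ?_
  by_cases hx : x ∈ Ioi (0:ℝ)
  · rw [indicator_of_mem hx]
  · rw [indicator_of_notMem hx, hF0 x (by simpa using hx), ENNReal.ofReal_zero]

/-- Pushforward under `x ↦ x⁻¹` of a density supported on `(0,∞)`. -/
theorem map_inv_withDensity {F G : ℝ → ℝ}
    (hF0 : ∀ x ≤ (0:ℝ), F x = 0) (hG0 : ∀ x ≤ (0:ℝ), G x = 0)
    (key : ∀ x ∈ Ioi (0:ℝ), (x^2)⁻¹ * F x⁻¹ = G x) :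
    (volume.withDensity fun y => ENNReal.ofReal (F y)).map Inv.inv
      = volume.withDensity fun y => ENNReal.ofReal (G y) := by
  ext s hs
  rw [Measure.map_apply measurable_inv hs, withDensity_apply _ (measurable_inv hs),
    withDensity_apply _ hs, setLIntegral_inter_Ioi hF0 (measurable_inv hs),
    setLIntegral_inter_Ioi hG0 hs]
  have himg : Ioi (0:ℝ) ∩ Inv.inv ⁻¹' s = Inv.inv '' (Ioi (0:ℝ) ∩ s) := by
    ext x
    constructor
    · rintro ⟨hx1, hx2⟩
      exact ⟨x⁻¹, ⟨show (0:ℝ) < x⁻¹ from inv_pos.2 hx1, hx2⟩, inv_inv x⟩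
    · rintro ⟨y, ⟨hy1, hy2⟩, rfl⟩
      exact ⟨show (0:ℝ) < y⁻¹ from inv_pos.2 hy1, by simpa [inv_inv] using hy2⟩
  rw [himg, lintegral_image_aux (measurableSet_Ioi.inter hs)
    (fun x hx => (hasDerivAt_inv (ne_of_gt hx.1)).hasDerivWithinAt)
    (inv_injective.injOn) (fun y => ENNReal.ofReal (F y))]
  refine setLIntegral_congr_fun (measurableSet_Ioi.inter hs) ?_
  intro x hx
  dsimp only
  rw [abs_neg, abs_of_nonneg (inv_nonneg.2 (sq_nonneg x)),
    ← ENNReal.ofReal_mul (inv_nonneg.2 (sq_nonneg x)), key x hx.1]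

/-- Pushforward of a density measure under negation. -/
theorem map_neg_withDensity (G : ℝ → ENNReal) :
    (volume.withDensity G).map (fun x : ℝ => -x)
      = volume.withDensity (fun x => G (-x)) := by
  ext s hs
  rw [Measure.map_apply measurable_neg hs, withDensity_apply _ (measurable_neg hs),
    withDensity_apply _ hs]
  have himg : (fun x : ℝ => -x) ⁻¹' s = (fun x : ℝ => -x) '' s := by
    ext x
    constructor
    · intro hx; exact ⟨-x, hx, neg_neg x⟩
    · rintro ⟨y, hy, rfl⟩; simpa [neg_neg] using hy
  rw [himg, lintegral_image_aux hs
    (fun x _ => (hasDerivAt_neg x).hasDerivWithinAt) neg_injective.injOn G]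
  refine setLIntegral_congr_fun hs ?_
  intro x hx
  norm_num

lemma uDens_zero_of_nonpos {α : ℝ} (hα : 0 < α) {x : ℝ} (hx : x ≤ 0) :
    uDens α (-1) x = 0 := by
  rcases eq_or_lt_of_le hx with rfl | hx'
  · rw [uDens, indicator_of_mem (by exact le_refl (0:ℝ))]
    rw [div_zero, Real.zero_rpow (by positivity), mul_zero]
  · rw [uDens, indicator_of_notMem (by simpa using hx')]

lemma vDens_neg_zero_of_nonpos {β : ℝ} (hβ : 0 < β) {x : ℝ} (hx : x ≤ 0) :
    vDens β 1 (-x) = 0 := by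
  rcases eq_or_lt_of_le hx with rfl | hx'
  · rw [vDens, neg_zero, indicator_of_mem (by exact le_refl (0:ℝ))]
    rw [div_zero, Real.zero_rpow (by positivity), mul_zero]
  · rw [vDens, indicator_of_notMem (by simp only [mem_Iic, not_le]; linarith)]

lemma key_identity {α β : ℝ} (hα : α ∈ Set.Ioo (0:ℝ) 2) (hβ : β ∈ Set.Ioo (0:ℝ) 2)
    (hαβ : α + β = 2) :
    ∀ x ∈ Ioi (0:ℝ), (x^2)⁻¹ * uDens α (-1) x⁻¹ = vDens β 1 (-x) := by
  intro x hx
  have hx0 : (0:ℝ) < x := hx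
  rw [uDens, indicator_of_mem (by exact (inv_pos.2 hx0).le),
    vDens, indicator_of_mem (by exact (neg_nonpos.2 hx0.le))]
  have hsin : Real.sin (β * π / 2) = Real.sin (α * π / 2) := by
    have hβα : β = 2 - α := by linarith
    rw [hβα, show (2 - α) * π / 2 = π - α * π / 2 by ring, Real.sin_pi_sub]
  rw [hsin]
  set c := Real.sin (α * π / 2) / π with hc
  have h1 : (-(-1:ℝ) / x⁻¹) = x := by
    rw [neg_neg, one_div, inv_inv]
  have h2 : (-(1:ℝ) / -x) = x⁻¹ := by
    rw [neg_div_neg_eq, one_div]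
  rw [h1, h2]
  have h3 : (x⁻¹ : ℝ) ^ (β / 2) = x ^ (α/2) / x := by
    rw [Real.inv_rpow hx0.le, show β / 2 = 1 - α/2 by linarith, Real.rpow_sub hx0,
      Real.rpow_one]
    field_simp
  rw [h3]
  have hxne : x ≠ 0 := hx0.ne'
  have h1x : (1:ℝ) + x ≠ 0 := by positivity
  have hxinv : x⁻¹ - (-1:ℝ) = x⁻¹ + 1 := by ring
  rw [hxinv, show (1:ℝ) - -x = 1 + x by ring]
  have ht : (0:ℝ) < x ^ (α/2) := Real.rpow_pos_of_pos hx0 _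
  field_simp

/-- For `α, β ∈ (0,2)` with `α + β = 2` and independent `U ∼ u_α(-1,·)`, `V ∼ v_β(1,·)`,
the random variables `-U·V` and `(-U·V)⁻¹` have the same distribution. -/
theorem neg_mul_overshoot_symmetric
    {Ω : Type*} [MeasureSpace Ω] [IsProbabilityMeasure (ℙ : Measure Ω)]
    (α β : ℝ) (hα : α ∈ Set.Ioo (0 : ℝ) 2) (hβ : β ∈ Set.Ioo (0 : ℝ) 2)
    (hαβ : α + β = 2)
    (U V : Ω → ℝ) (hU : Measurable U) (hV : Measurable V)
    (hindep : IndepFun U V ℙ)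
    (hUd : Measure.map U ℙ = volume.withDensity (fun y => ENNReal.ofReal (uDens α (-1) y)))
    (hVd : Measure.map V ℙ = volume.withDensity (fun y => ENNReal.ofReal (vDens β 1 y))) :
    ∀ s : ℝ, ℙ {ω | -(U ω * V ω) ≤ s} = ℙ {ω | (-(U ω * V ω))⁻¹ ≤ s} := by
  set μX := Measure.map U ℙ with hμX
  set μY := Measure.map (fun ω => -V ω) ℙ with hμY
  have hμYd : μY = volume.withDensity (fun y => ENNReal.ofReal (vDens β 1 (-y))) := by
    have : μY = Measure.map (fun x : ℝ => -x) (Measure.map V ℙ) := by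
      rw [hμY, Measure.map_map measurable_neg hV]; rfl
    rw [this, hVd, map_neg_withDensity]
  have instX : IsProbabilityMeasure μX := Measure.isProbabilityMeasure_map hU.aemeasurable
  have instY : IsProbabilityMeasure μY := Measure.isProbabilityMeasure_map hV.neg.aemeasurable
  -- the inv pushforward identities
  have hinvX : Measure.map Inv.inv μX = μY := by
    rw [hUd, hμYd]
    exact map_inv_withDensity (fun x hx => uDens_zero_of_nonpos hα.1 hx)
      (fun x hx => vDens_neg_zero_of_nonpos hβ.1 hx) (key_identity hα hβ hαβ)
  have hinvY : Measure.map Inv.inv μY = μX := by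
    rw [← hinvX, Measure.map_map measurable_inv measurable_inv]
    have : (Inv.inv ∘ Inv.inv : ℝ → ℝ) = id := funext fun x => inv_inv x
    rw [this, Measure.map_id]
  -- independence gives the product law
  have hXYindep : IndepFun U (fun ω => -V ω) ℙ := hindep.comp measurable_id measurable_neg
  have hjoint : Measure.map (fun ω => (U ω, -V ω)) ℙ = μX.prod μY :=
    (ProbabilityTheory.indepFun_iff_map_prod_eq_prod_map_map hU.aemeasurable
      hV.neg.aemeasurable).mp hXYindep
  have hmulZ : Measure.map (fun ω => -(U ω * V ω)) ℙ
      = Measure.map (fun p : ℝ × ℝ => p.1 * p.2) (μX.prod μY) := by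
    have hcomp : (fun ω => -(U ω * V ω))
        = (fun p : ℝ × ℝ => p.1 * p.2) ∘ (fun ω => (U ω, -V ω)) := by
      funext ω; simp [mul_neg]
    rw [hcomp, ← Measure.map_map (show Measurable fun p : ℝ × ℝ => p.1 * p.2 from measurable_fst.mul measurable_snd) (hU.prodMk (show Measurable fun ω => -V ω from hV.neg)),
      hjoint]
  have hswap : Measure.map Inv.inv (Measure.map (fun p : ℝ × ℝ => p.1 * p.2) (μX.prod μY))
      = Measure.map (fun p : ℝ × ℝ => p.1 * p.2) (μX.prod μY) := by
    rw [Measure.map_map measurable_inv (show Measurable fun p : ℝ × ℝ => p.1 * p.2 from measurable_fst.mul measurable_snd)]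
    have hcomp : (Inv.inv ∘ fun p : ℝ × ℝ => p.1 * p.2)
        = (fun p : ℝ × ℝ => p.1 * p.2) ∘ (Prod.map Inv.inv Inv.inv) := by
      funext p; simp [mul_inv, mul_comm]
    rw [hcomp, ← Measure.map_map (show Measurable fun p : ℝ × ℝ => p.1 * p.2 from measurable_fst.mul measurable_snd)
      (measurable_inv.prodMap measurable_inv),
      ← Measure.map_prod_map _ _ measurable_inv measurable_inv, hinvX, hinvY,
      ← Measure.prod_swap,
      Measure.map_map (show Measurable fun p : ℝ × ℝ => p.1 * p.2 from measurable_fst.mul measurable_snd) measurable_swap]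
    congr 1
    funext p
    exact mul_comm _ _
  intro s
  have h1 : ℙ {ω | -(U ω * V ω) ≤ s}
      = Measure.map (fun ω => -(U ω * V ω)) ℙ (Iic s) := by
    rw [Measure.map_apply (show Measurable fun ω => -(U ω * V ω) from (hU.mul hV).neg) measurableSet_Iic]; rfl
  have h2 : ℙ {ω | (-(U ω * V ω))⁻¹ ≤ s}
      = Measure.map Inv.inv (Measure.map (fun ω => -(U ω * V ω)) ℙ) (Iic s) := by
    rw [Measure.map_map measurable_inv (show Measurable fun ω => -(U ω * V ω) from (hU.mul hV).neg),
      Measure.map_apply (measurable_inv.comp (show Measurable fun ω => -(U ω * V ω) from (hU.mul hV).neg)) measurableSet_Iic]; rfl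
  rw [h1, h2, hmulZ, hswap]
end

section
/- Let (Ω, F, P) be a probability space, r < 0 a real number, Y a strictly positive random variable with E(Y^r) < ∞, and (W_i)_{i≥1} a sequence of strictly positive random variables, independent of each other and of Y, all with the same distribution, such that E(W_1^r) < 1. Then the products Y_n := Y · ∏_{i=1}^{n−1} W_i converge to ∞ almost surely as n → ∞. -/
open MeasureTheory ProbabilityTheory Filter Finset
open scoped ENNReal

/-- If `Y > 0` with `E(Y^r) < ∞` (`r < 0`), and `(W_i)` are strictly positive, i.i.d.,
independent of `Y`, with `E(W_1^r) < 1`, then `Y_n = Y ∏_{i=1}^{n-1} W_i → ∞` a.s. -/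
theorem prod_tendsto_atTop_of_neg_moment_lt_one
    {Ω : Type*} [MeasureSpace Ω] [IsProbabilityMeasure (ℙ : Measure Ω)]
    (r : ℝ) (hr : r < 0)
    (Y : Ω → ℝ) (hY_meas : Measurable Y) (hY_pos : ∀ ω, 0 < Y ω)
    (hY_mom : Integrable (fun ω => Y ω ^ r) ℙ)
    (W : ℕ → Ω → ℝ) (hW_meas : ∀ i, Measurable (W i)) (hW_pos : ∀ i ω, 0 < W i ω)
    (h_indep : iIndepFun (m := fun _ : ℕ => (inferInstance : MeasurableSpace ℝ))
      (fun i : ℕ => match i with | 0 => Y | (k + 1) => W k) ℙ)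
    (h_ident : ∀ i, IdentDistrib (W i) (W 0) ℙ ℙ)
    (hW_int : Integrable (fun ω => W 0 ω ^ r) ℙ)
    (hW_mom : ∫ ω, W 0 ω ^ r ∂ℙ < 1) :
    ∀ᵐ ω ∂ℙ, Tendsto (fun n => Y ω * ∏ i ∈ Finset.range n, W i ω) atTop atTop := by
  classical
  set X : ℕ → Ω → ℝ := fun i => match i with | 0 => Y | (k + 1) => W k with hX
  have hX_meas : ∀ i, Measurable (X i) := by
    intro i; cases i with
    | zero => exact hY_meas
    | succ k => exact hW_meas k
  have hX_pos : ∀ i ω, 0 < X i ω := by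
    intro i ω; cases i with
    | zero => exact hY_pos ω
    | succ k => exact hW_pos k ω
  have hrpow : Measurable fun x : ℝ => x ^ r := by measurability
  set g : ℕ → Ω → ℝ := fun i ω => X i ω ^ r with hgdef
  have hg_meas : ∀ i, Measurable (g i) := fun i => hrpow.comp (hX_meas i)
  have hg_pos : ∀ i ω, 0 < g i ω := fun i ω => Real.rpow_pos_of_pos (hX_pos i ω) r
  have hg_indep : iIndepFun (m := fun _ : ℕ => (inferInstance : MeasurableSpace ℝ)) g ℙ :=
    h_indep.comp (fun _ x => x ^ r) (fun _ => hrpow)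
  -- identical distribution of the powered W's
  have h_ident' : ∀ k, IdentDistrib (fun ω => W k ω ^ r) (fun ω => W 0 ω ^ r) ℙ ℙ := by
    intro k
    exact (h_ident k).comp hrpow
  have hg_int : ∀ i, Integrable (g i) ℙ := by
    intro i; cases i with
    | zero => exact hY_mom
    | succ k => exact (h_ident' k).integrable_iff.mpr hW_int
  set A : ℝ := ∫ ω, Y ω ^ r ∂ℙ with hAdef
  set c : ℝ := ∫ ω, W 0 ω ^ r ∂ℙ with hcdef
  have hA : 0 ≤ A := integral_nonneg fun ω => (Real.rpow_pos_of_pos (hY_pos ω) r).le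
  have hc0 : 0 ≤ c := integral_nonneg fun ω => (Real.rpow_pos_of_pos (hW_pos 0 ω) r).le
  have hg_integral : ∀ i, ∫ ω, g i ω ∂ℙ = match i with | 0 => A | (_ + 1) => c := by
    intro i; cases i with
    | zero => rfl
    | succ k => exact (h_ident' k).integral_eq
  -- product integral formula by induction
  have key : ∀ n, Integrable (fun ω => ∏ i ∈ Finset.range n, g i ω) ℙ ∧
      ∫ ω, ∏ i ∈ Finset.range n, g i ω ∂ℙ = ∏ i ∈ Finset.range n, ∫ ω, g i ω ∂ℙ := by
    intro n
    induction n with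
    | zero => simp
    | succ n ih =>
      have hind : IndepFun (fun ω => ∏ i ∈ Finset.range n, g i ω) (g n) ℙ := by
        have := hg_indep.indepFun_prod_range_succ hg_meas n
        have heq : (∏ j ∈ Finset.range n, g j) = fun ω => ∏ i ∈ Finset.range n, g i ω := by
          funext ω; simp
        rwa [heq] at this
      have heq : ((fun ω => ∏ i ∈ Finset.range n, g i ω) * g n)
          = fun ω => ∏ i ∈ Finset.range (n + 1), g i ω := by
        funext ω; simp [Finset.prod_range_succ]
      constructor
      · have := hind.integrable_mul ih.1 (hg_int n)
        rwa [heq] at this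
      · have := hind.integral_mul_eq_mul_integral ih.1.aestronglyMeasurable (hg_int n).aestronglyMeasurable
        rw [heq] at this
        rw [this, ih.2, Finset.prod_range_succ]
  have hZ_int : ∀ n, ∫ ω, ∏ i ∈ Finset.range (n + 1), g i ω ∂ℙ = A * c ^ n := by
    intro n
    rw [(key (n + 1)).2, Finset.prod_range_succ']
    have h1 : ∀ i, (∫ ω, g (i + 1) ω ∂ℙ) = c := fun i => hg_integral (i + 1)
    rw [Finset.prod_congr rfl fun i _ => h1 i, Finset.prod_const, hg_integral 0,
      Finset.card_range]
    ring
  -- lintegral of the nonnegative Z_n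
  set F : ℕ → Ω → ℝ≥0∞ := fun n ω => ENNReal.ofReal (∏ i ∈ Finset.range (n + 1), g i ω)
    with hFdef
  have hF_meas : ∀ n, Measurable (F n) := by
    intro n
    exact (Finset.measurable_prod _ fun i _ => hg_meas i).ennreal_ofReal
  have hF_lint : ∀ n, ∫⁻ ω, F n ω ∂ℙ = ENNReal.ofReal (A * c ^ n) := by
    intro n
    rw [← ofReal_integral_eq_lintegral_ofReal (key (n + 1)).1
      (Filter.Eventually.of_forall fun ω =>
        Finset.prod_nonneg fun i _ => (hg_pos i ω).le), hZ_int n]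
  have htsum : ∑' n, ∫⁻ ω, F n ω ∂ℙ ≠ ⊤ := by
    have hc1 : ENNReal.ofReal c < 1 := by
      rw [← ENNReal.ofReal_one]
      exact ENNReal.ofReal_lt_ofReal_iff_of_nonneg hc0 |>.mpr hW_mom
    have heq : ∀ n, ∫⁻ ω, F n ω ∂ℙ = ENNReal.ofReal A * ENNReal.ofReal c ^ n := by
      intro n
      rw [hF_lint n, ENNReal.ofReal_mul hA, ENNReal.ofReal_pow hc0]
    rw [tsum_congr heq, ENNReal.tsum_mul_left, ENNReal.tsum_geometric]
    refine ENNReal.mul_ne_top ENNReal.ofReal_ne_top ?_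
    rw [Ne, ENNReal.inv_eq_top, tsub_eq_zero_iff_le]
    exact not_le.mpr hc1
  have h_ae : ∀ᵐ ω ∂ℙ, (∑' n, F n ω) < ⊤ := by
    refine ae_lt_top (Measurable.ennreal_tsum hF_meas) ?_
    rw [lintegral_tsum fun n => (hF_meas n).aemeasurable]
    exact htsum
  filter_upwards [h_ae] with ω hω
  -- pointwise: Z_n ω → 0
  have hF0 : Tendsto (fun n => F n ω) atTop (nhds 0) :=
    ENNReal.tendsto_atTop_zero_of_tsum_ne_top hω.ne
  have hZ0 : Tendsto (fun n => ∏ i ∈ Finset.range (n + 1), g i ω) atTop (nhds 0) := by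
    have := (ENNReal.tendsto_toReal (by simp : (0 : ℝ≥0∞) ≠ ⊤)).comp hF0
    simp only [Function.comp_def, ENNReal.toReal_zero] at this
    have heq : (fun n => (F n ω).toReal) = fun n => ∏ i ∈ Finset.range (n + 1), g i ω := by
      funext n
      exact ENNReal.toReal_ofReal (Finset.prod_nonneg fun i _ => (hg_pos i ω).le)
    rwa [heq] at this
  -- Z_n ω = (Y_n ω) ^ r
  set u : ℕ → ℝ := fun n => Y ω * ∏ i ∈ Finset.range n, W i ω with hudef
  have hu_pos : ∀ n, 0 < u n :=
    fun n => mul_pos (hY_pos ω) (Finset.prod_pos fun i _ => hW_pos i ω)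
  have hZu : ∀ n, ∏ i ∈ Finset.range (n + 1), g i ω = u n ^ r := by
    intro n
    rw [hudef]
    rw [Real.mul_rpow (hY_pos ω).le (Finset.prod_nonneg fun i _ => (hW_pos i ω).le),
      ← Real.finset_prod_rpow _ _ (fun i _ => (hW_pos i ω).le) r,
      Finset.prod_range_succ']
    rw [mul_comm]
  have hur : Tendsto (fun n => u n ^ r) atTop (nhds 0) := by
    have heq : (fun n => ∏ i ∈ Finset.range (n + 1), g i ω) = fun n => u n ^ r := by
      funext n; exact hZu n
    rwa [heq] at hZ0
  -- conclude u n → ∞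
  rw [tendsto_atTop]
  intro M
  have hM1 : (0 : ℝ) < max M 1 := lt_of_lt_of_le one_pos (le_max_right _ _)
  have hpow : 0 < (max M 1) ^ r := Real.rpow_pos_of_pos hM1 r
  filter_upwards [hur.eventually_lt_const hpow] with n hn
  have : max M 1 < u n := (Real.rpow_lt_rpow_iff_of_neg (hu_pos n) hM1 hr).mp hn
  exact le_of_lt (lt_of_le_of_lt (le_max_left _ _) this)
end
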